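/- Let {S_j}_{j=1}^N be an IFS of contractive similitudes on ℝ^d with symbolic tree (X, 𝓔_v) and slanted edge set 𝓔_s. Then the graph (X, 𝓔_v ∪ 𝓔_s) is a diamond graph: (i) every edge joins vertices whose levels differ by exactly 1; (ii) if p(x, y, z) is a path with x ≠ z and |x| = |z| = |y| − 1, then there exists y' ∈ X with |y'| = |x| − 1 such that p(x, y', z) is also a path (one may take y' = y⁻²). -/

import Mathlib

open Metric Filter

namespace HypIFS

/-- Euclidean space `ℝ^d`. -/
abbrev Euc (d : ℕ) := EuclideanSpace ℝ (Fin d)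

/-- The distance `dist(A, B)` between two subsets of a metric space. -/
noncomputable def setDist {E : Type*} [PseudoMetricSpace E] (A B : Set E) : ℝ :=
  sInf (Set.image2 dist A B)

variable {d N : ℕ}

/-- For a word `x = i₁⋯i_k`, the composition `S_x = S_{i₁} ∘ ⋯ ∘ S_{i_k}`. -/
def sWord (S : Fin N → Euc d → Euc d) : List (Fin N) → Euc d → Euc d :=
  fun w => w.foldr (fun i f => S i ∘ f) id

/-- For a word `x = i₁⋯i_k`, the product `r_x = r_{i₁} ⋯ r_{i_k}` of contraction ratios. -/
def rWord (ρ : Fin N → ℝ) (w : List (Fin N)) : ℝ := (w.map ρ).prod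

/-- The coding level `𝓙_n = {i₁⋯i_k : r_{i₁⋯i_k} ≤ rⁿ < r_{i₁⋯i_{k−1}}}`,
with `𝓙_0` consisting of the empty word. -/
def Jlevel (ρ : Fin N → ℝ) (r : ℝ) (n : ℕ) : Set (List (Fin N)) :=
  if n = 0 then {([] : List (Fin N))}
  else {w | rWord ρ w ≤ r ^ n ∧ r ^ n < rWord ρ w.dropLast}

/-- The vertical (parent–child) edge relation: `x ∈ 𝓙_n` is the initial segment
of `y ∈ 𝓙_{n+1}`. -/
def EV (ρ : Fin N → ℝ) (r : ℝ) (x y : List (Fin N)) : Prop :=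
  ∃ n : ℕ, x ∈ Jlevel ρ r n ∧ y ∈ Jlevel ρ r (n + 1) ∧ x <+: y

/-- The horizontal edge relation: `x ≠ y` in the same level `𝓙_n` with
`dist(K_x, K_y) ≤ κ rⁿ`. -/
def EH (S : Fin N → Euc d → Euc d) (ρ : Fin N → ℝ) (r κ : ℝ) (K : Set (Euc d))
    (x y : List (Fin N)) : Prop :=
  ∃ n : ℕ, x ∈ Jlevel ρ r n ∧ y ∈ Jlevel ρ r n ∧ x ≠ y ∧
    setDist (sWord S x '' K) (sWord S y '' K) ≤ κ * r ^ n

/-- The augmented tree `(X, 𝓔)`, `𝓔 = 𝓔_v ∪ 𝓔_h`, as a graph on the word space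
(words belonging to no level `𝓙_n` are isolated vertices). -/
def augIFS (S : Fin N → Euc d → Euc d) (ρ : Fin N → ℝ) (r κ : ℝ) (K : Set (Euc d)) :
    SimpleGraph (List (Fin N)) where
  Adj x y := (EV ρ r x y ∨ EV ρ r y x ∨ EH S ρ r κ K x y ∨ EH S ρ r κ K y x) ∧ x ≠ y
  symm := by
    constructor
    rintro x y ⟨h1 | h2 | h3 | h4, hne⟩
    · exact ⟨Or.inr (Or.inl h1), hne.symm⟩
    · exact ⟨Or.inl h2, hne.symm⟩
    · exact ⟨Or.inr (Or.inr (Or.inr h3)), hne.symm⟩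
    · exact ⟨Or.inr (Or.inr (Or.inl h4)), hne.symm⟩
  loopless := ⟨fun x h => h.2 rfl⟩

/-- A graph is of bounded degree if `sup_x deg(x) < ∞`. -/
def BddDeg {V : Type*} (G : SimpleGraph V) : Prop :=
  ∃ M : ℕ, ∀ x : V, {y | G.Adj x y}.Finite ∧ {y | G.Adj x y}.ncard ≤ M

/-- The slanted edge set `𝓔_s`: levels differ by one, not a vertical edge, and
`dist(K_x, K_y) ≤ κ r^{min(|x|,|y|)}`. -/
def ES (S : Fin N → Euc d → Euc d) (ρ : Fin N → ℝ) (r κ : ℝ) (K : Set (Euc d))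
    (x y : List (Fin N)) : Prop :=
  ∃ n : ℕ, ((x ∈ Jlevel ρ r n ∧ y ∈ Jlevel ρ r (n + 1)) ∨
            (y ∈ Jlevel ρ r n ∧ x ∈ Jlevel ρ r (n + 1))) ∧
    ¬ EV ρ r x y ∧ ¬ EV ρ r y x ∧
    setDist (sWord S x '' K) (sWord S y '' K) ≤ κ * r ^ n

/-- The graph `(X, 𝓔_v ∪ 𝓔_s)` with slanted edges. -/
def slantIFS (S : Fin N → Euc d → Euc d) (ρ : Fin N → ℝ) (r κ : ℝ) (K : Set (Euc d)) :
    SimpleGraph (List (Fin N)) where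
  Adj x y := (EV ρ r x y ∨ EV ρ r y x ∨ ES S ρ r κ K x y ∨ ES S ρ r κ K y x) ∧ x ≠ y
  symm := by
    constructor
    rintro x y ⟨h1 | h2 | h3 | h4, hne⟩
    · exact ⟨Or.inr (Or.inl h1), hne.symm⟩
    · exact ⟨Or.inl h2, hne.symm⟩
    · exact ⟨Or.inr (Or.inr (Or.inr h3)), hne.symm⟩
    · exact ⟨Or.inr (Or.inr (Or.inl h4)), hne.symm⟩
  loopless := ⟨fun x h => h.2 rfl⟩


/-! ### Auxiliary lemmas -/

lemma rWord_append (ρ : Fin N → ℝ) (a b : List (Fin N)) :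
    rWord ρ (a ++ b) = rWord ρ a * rWord ρ b := by simp [rWord]

lemma rWord_pos {ρ : Fin N → ℝ} (hρ0 : ∀ j, 0 < ρ j) (w : List (Fin N)) :
    0 < rWord ρ w := by
  refine List.prod_pos ?_
  intro a ha
  rcases List.mem_map.1 ha with ⟨j, _, rfl⟩
  exact hρ0 j

lemma rWord_eq_dropLast {ρ : Fin N → ℝ} {w : List (Fin N)} (hw : w ≠ []) :
    rWord ρ w = rWord ρ w.dropLast * ρ (w.getLast hw) := by
  conv_lhs => rw [← List.dropLast_append_getLast hw]
  rw [rWord_append]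
  simp [rWord]

lemma nil_not_mem_Jlevel {ρ : Fin N → ℝ} {r : ℝ} {n : ℕ} (hn : n ≠ 0) :
    ([] : List (Fin N)) ∉ Jlevel ρ r n := by
  intro h
  simp only [Jlevel, if_neg hn, Set.mem_setOf_eq, List.dropLast_nil] at h
  have h1 : rWord ρ ([] : List (Fin N)) = 1 := rfl
  rw [h1] at h
  linarith [h.1, h.2]

lemma Jlevel_bounds {ρ : Fin N → ℝ} {r : ℝ} (hρ0 : ∀ j, 0 < ρ j)
    (hrle : ∀ j, r ≤ ρ j) (hr0 : 0 < r) {n : ℕ} (hn : n ≠ 0) {w : List (Fin N)}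
    (hw : w ∈ Jlevel ρ r n) : r ^ (n + 1) < rWord ρ w ∧ rWord ρ w ≤ r ^ n := by
  have hwne : w ≠ [] := by rintro rfl; exact nil_not_mem_Jlevel hn hw
  simp only [Jlevel, if_neg hn, Set.mem_setOf_eq] at hw
  refine ⟨?_, hw.1⟩
  have h1 := rWord_eq_dropLast (ρ := ρ) hwne
  have h2 : rWord ρ w.dropLast * r ≤ rWord ρ w.dropLast * ρ (w.getLast hwne) :=
    mul_le_mul_of_nonneg_left (hrle _) (le_of_lt (rWord_pos hρ0 _))
  have h3 : r ^ n * r < rWord ρ w.dropLast * r :=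
    mul_lt_mul_of_pos_right hw.2 hr0
  calc r ^ (n + 1) = r ^ n * r := by ring
    _ < rWord ρ w.dropLast * r := h3
    _ ≤ rWord ρ w.dropLast * ρ (w.getLast hwne) := h2
    _ = rWord ρ w := h1.symm

lemma Jlevel_unique {ρ : Fin N → ℝ} {r : ℝ} (hρ0 : ∀ j, 0 < ρ j)
    (hrle : ∀ j, r ≤ ρ j) (hr0 : 0 < r) (hr1 : r < 1)
    {m n : ℕ} {w : List (Fin N)}
    (hm : w ∈ Jlevel ρ r m) (hn : w ∈ Jlevel ρ r n) : m = n := by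
  by_contra hne
  wlog hlt : m < n generalizing m n with H
  · exact H hn hm (Ne.symm hne) (by omega)
  by_cases hm0 : m = 0
  · subst hm0
    have hw : w = [] := by simpa [Jlevel] using hm
    subst hw
    exact nil_not_mem_Jlevel (by omega) hn
  · have hb1 := Jlevel_bounds hρ0 hrle hr0 hm0 hm
    have hb2 := Jlevel_bounds hρ0 hrle hr0 (by omega : n ≠ 0) hn
    have hpow : r ^ n ≤ r ^ (m + 1) := pow_le_pow_of_le_one hr0.le hr1.le (by omega)
    linarith [hb1.1, hb2.2]

lemma Jlevel_ancestor {ρ : Fin N → ℝ} {r : ℝ} (hr0 : 0 < r) (hr1 : r < 1)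
    {n m : ℕ} (hmn : m ≤ n) {y : List (Fin N)} (hy : y ∈ Jlevel ρ r n) :
    ∃ w, w <+: y ∧ w ∈ Jlevel ρ r m := by
  classical
  by_cases hm0 : m = 0
  · exact ⟨[], List.nil_prefix, by simp [hm0, Jlevel]⟩
  have hn0 : n ≠ 0 := by omega
  have hyr : rWord ρ y ≤ r ^ n := by
    simp only [Jlevel, if_neg hn0, Set.mem_setOf_eq] at hy
    exact hy.1
  have hyr' : rWord ρ y ≤ r ^ m :=
    le_trans hyr (pow_le_pow_of_le_one hr0.le hr1.le hmn)
  have hex : ∃ k, rWord ρ (y.take k) ≤ r ^ m := ⟨y.length, by simpa using hyr'⟩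
  set k := Nat.find hex with hkdef
  have hks : rWord ρ (y.take k) ≤ r ^ m := Nat.find_spec hex
  have hk0 : k ≠ 0 := by
    intro h
    rw [h, List.take_zero] at hks
    have h1 : rWord ρ ([] : List (Fin N)) = 1 := rfl
    rw [h1] at hks
    have : r ^ m < 1 := pow_lt_one₀ hr0.le hr1 hm0
    linarith
  have hkle : k ≤ y.length := Nat.find_min' hex (by simpa using hyr')
  refine ⟨y.take k, List.take_prefix _ _, ?_⟩
  simp only [Jlevel, if_neg hm0, Set.mem_setOf_eq]
  refine ⟨hks, ?_⟩
  have hdl : (y.take k).dropLast = y.take (k - 1) := by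
    rw [List.dropLast_eq_take, List.length_take, List.take_take]
    congr 1
    omega
  rw [hdl]
  by_contra hle
  push_neg at hle
  exact Nat.find_min hex (show k - 1 < k by omega) hle

lemma sWord_append (S : Fin N → Euc d → Euc d) (a b : List (Fin N)) :
    sWord S (a ++ b) = sWord S a ∘ sWord S b := by
  induction a with
  | nil => rfl
  | cons i a ih =>
      show S i ∘ sWord S (a ++ b) = (S i ∘ sWord S a) ∘ sWord S b
      rw [ih]
      rfl

lemma sWord_image_subset (S : Fin N → Euc d → Euc d) {K : Set (Euc d)}
    (hKinv : K = ⋃ j, S j '' K) (w : List (Fin N)) : sWord S w '' K ⊆ K := by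
  induction w with
  | nil => simp [sWord]
  | cons i w ih =>
      have h1 : sWord S (i :: w) '' K = S i '' (sWord S w '' K) := by
        rw [show sWord S (i :: w) = S i ∘ sWord S w from rfl, Set.image_comp]
      rw [h1]
      refine subset_trans (Set.image_mono ih) ?_
      conv_rhs => rw [hKinv]
      exact Set.subset_iUnion (fun j => S j '' K) i

lemma image_subset_of_prefix (S : Fin N → Euc d → Euc d) {K : Set (Euc d)}
    (hKinv : K = ⋃ j, S j '' K) {w' w : List (Fin N)} (hpre : w' <+: w) :
    sWord S w '' K ⊆ sWord S w' '' K := by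
  rcases hpre with ⟨t, rfl⟩
  rw [sWord_append, Set.image_comp]
  exact Set.image_mono (sWord_image_subset S hKinv t)

lemma setDist_bddBelow {E : Type*} [PseudoMetricSpace E] (A B : Set E) :
    BddBelow (Set.image2 dist A B) := by
  refine ⟨0, ?_⟩
  rintro x ⟨a, _, b, _, rfl⟩
  exact dist_nonneg

lemma setDist_le_setDist {E : Type*} [PseudoMetricSpace E] {A B B' : Set E}
    (hB : B' ⊆ B) (hB' : B'.Nonempty) (hA : A.Nonempty) :
    setDist A B ≤ setDist A B' :=
  csInf_le_csInf (setDist_bddBelow A B) (hA.image2 hB')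
    (Set.image2_subset Set.Subset.rfl hB)

lemma setDist_comm {E : Type*} [PseudoMetricSpace E] (A B : Set E) :
    setDist A B = setDist B A := by
  unfold setDist
  rw [Set.image2_swap]
  simp only [dist_comm]

lemma setDist_le_zero {E : Type*} [PseudoMetricSpace E] {A B : Set E} {p : E}
    (hpA : p ∈ A) (hpB : p ∈ B) : setDist A B ≤ 0 :=
  csInf_le (setDist_bddBelow A B) ⟨p, hpA, p, hpB, dist_self p⟩

lemma slant_adj_of {S : Fin N → Euc d → Euc d} {ρ : Fin N → ℝ} {r κ : ℝ}
    {K : Set (Euc d)} (hρ0 : ∀ j, 0 < ρ j) (hrle : ∀ j, r ≤ ρ j)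
    (hr0 : 0 < r) (hr1 : r < 1) {m : ℕ} {a b : List (Fin N)}
    (ha : a ∈ Jlevel ρ r m) (hb : b ∈ Jlevel ρ r (m + 1))
    (hd : setDist (sWord S a '' K) (sWord S b '' K) ≤ κ * r ^ m) :
    (slantIFS S ρ r κ K).Adj a b := by
  have hne : a ≠ b := by
    rintro rfl
    have := Jlevel_unique hρ0 hrle hr0 hr1 ha hb
    omega
  by_cases hpre : a <+: b
  · exact ⟨Or.inl ⟨m, ha, hb, hpre⟩, hne⟩
  · refine ⟨Or.inr (Or.inr (Or.inl ⟨m, Or.inl ⟨ha, hb⟩, ?_, ?_, hd⟩)), hne⟩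
    · rintro ⟨m', _, _, hp⟩
      exact hpre hp
    · rintro ⟨m', hb', ha', hp⟩
      have e1 := Jlevel_unique hρ0 hrle hr0 hr1 hb hb'
      have e2 := Jlevel_unique hρ0 hrle hr0 hr1 ha ha'
      omega

lemma slant_adj_dist {S : Fin N → Euc d → Euc d} {ρ : Fin N → ℝ} {r κ : ℝ}
    {K : Set (Euc d)} (hρ0 : ∀ j, 0 < ρ j) (hrle : ∀ j, r ≤ ρ j)
    (hr0 : 0 < r) (hr1 : r < 1) {n : ℕ} {x y : List (Fin N)}
    (h : (slantIFS S ρ r κ K).Adj x y)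
    (hx : x ∈ Jlevel ρ r n) (hy : y ∈ Jlevel ρ r (n + 1)) :
    x <+: y ∨ setDist (sWord S x '' K) (sWord S y '' K) ≤ κ * r ^ n := by
  obtain ⟨h, -⟩ := h
  rcases h with ⟨m, _, _, hp⟩ | ⟨m, hy', hx', hp⟩ | ⟨m, hor, -, -, hd⟩ | ⟨m, hor, -, -, hd⟩
  · exact Or.inl hp
  · have e1 := Jlevel_unique hρ0 hrle hr0 hr1 hy hy'
    have e2 := Jlevel_unique hρ0 hrle hr0 hr1 hx hx'
    omega
  · rcases hor with ⟨hx', hy'⟩ | ⟨hy', hx'⟩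
    · have e := Jlevel_unique hρ0 hrle hr0 hr1 hx hx'
      right
      rw [e]
      exact hd
    · have e1 := Jlevel_unique hρ0 hrle hr0 hr1 hy hy'
      have e2 := Jlevel_unique hρ0 hrle hr0 hr1 hx hx'
      omega
  · rcases hor with ⟨hy', hx'⟩ | ⟨hx', hy'⟩
    · have e1 := Jlevel_unique hρ0 hrle hr0 hr1 hy hy'
      have e2 := Jlevel_unique hρ0 hrle hr0 hr1 hx hx'
      omega
    · have e := Jlevel_unique hρ0 hrle hr0 hr1 hx hx'
      right
      rw [e, setDist_comm]
      exact hd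

/-- The graph `(X, 𝓔_v ∪ 𝓔_s)` with slanted edges is a diamond graph:
(i) every edge joins vertices in consecutive levels; (ii) if `x – y – z` is a
path with `x ≠ z` and `|x| = |z| = |y| − 1`, there is `y'` with `|y'| = |x| − 1`
such that `x – y' – z` is a path. -/
theorem slanted_graph_is_diamond {d N : ℕ} (hN : 2 ≤ N)
    (S : Fin N → Euc d → Euc d) (ρ : Fin N → ℝ) (r κ : ℝ) (K : Set (Euc d))
    (hρ0 : ∀ j, 0 < ρ j) (hρ1 : ∀ j, ρ j < 1)
    (hsim : ∀ j a b, dist (S j a) (S j b) = ρ j * dist a b)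
    (hr : IsLeast (Set.range ρ) r) (hκ : 0 < κ)
    (hKc : IsCompact K) (hKne : K.Nonempty) (hKinv : K = ⋃ j, S j '' K) :
    (∀ x y : List (Fin N), (slantIFS S ρ r κ K).Adj x y →
      ∃ n : ℕ, (x ∈ Jlevel ρ r n ∧ y ∈ Jlevel ρ r (n + 1)) ∨
               (y ∈ Jlevel ρ r n ∧ x ∈ Jlevel ρ r (n + 1))) ∧
    (∀ (x y z : List (Fin N)) (n : ℕ),
      (slantIFS S ρ r κ K).Adj x y → (slantIFS S ρ r κ K).Adj y z → x ≠ z →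
      x ∈ Jlevel ρ r n → z ∈ Jlevel ρ r n → y ∈ Jlevel ρ r (n + 1) →
      ∃ y' : List (Fin N), y' ∈ Jlevel ρ r (n - 1) ∧
        (slantIFS S ρ r κ K).Adj x y' ∧ (slantIFS S ρ r κ K).Adj y' z) := by
  obtain ⟨⟨j0, hj0⟩, hlb⟩ := hr
  have hr0 : 0 < r := by rw [← hj0]; exact hρ0 j0
  have hr1 : r < 1 := by rw [← hj0]; exact hρ1 j0
  have hrle : ∀ j, r ≤ ρ j := fun j => hlb ⟨j, rfl⟩
  constructor
  · rintro x y ⟨h, -⟩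
    rcases h with ⟨n, hx, hy, -⟩ | ⟨n, hy, hx, -⟩ | ⟨n, hor, -, -, -⟩ | ⟨n, hor, -, -, -⟩
    · exact ⟨n, Or.inl ⟨hx, hy⟩⟩
    · exact ⟨n, Or.inr ⟨hy, hx⟩⟩
    · exact ⟨n, hor⟩
    · exact ⟨n, hor.symm⟩
  · intro x y z n hxy hyz hxz hx hz hy
    have hn0 : n ≠ 0 := by
      rintro rfl
      have hx' : x = [] := by simpa [Jlevel] using hx
      have hz' : z = [] := by simpa [Jlevel] using hz
      exact hxz (hx'.trans hz'.symm)
    obtain ⟨m, rfl⟩ : ∃ m, n = m + 1 := ⟨n - 1, by omega⟩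
    obtain ⟨y', hy'pre, hy'mem⟩ :=
      Jlevel_ancestor (ρ := ρ) hr0 hr1 (show m ≤ (m + 1) + 1 by omega) hy
    have hKy' : (sWord S y' '' K).Nonempty := hKne.image _
    have hKy : (sWord S y '' K).Nonempty := hKne.image _
    have hsub : sWord S y '' K ⊆ sWord S y' '' K :=
      image_subset_of_prefix S hKinv hy'pre
    have hrm : κ * r ^ (m + 1) ≤ κ * r ^ m :=
      mul_le_mul_of_nonneg_left (pow_le_pow_of_le_one hr0.le hr1.le (by omega)) hκ.le
    have key : ∀ w : List (Fin N), w ∈ Jlevel ρ r (m + 1) →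
        (w <+: y ∨ setDist (sWord S w '' K) (sWord S y '' K) ≤ κ * r ^ (m + 1)) →
        (slantIFS S ρ r κ K).Adj y' w := by
      intro w hw hcase
      have hKw : (sWord S w '' K).Nonempty := hKne.image _
      refine slant_adj_of hρ0 hrle hr0 hr1 hy'mem hw ?_
      rcases hcase with hpre | hdist
      · rcases List.prefix_or_prefix_of_prefix hpre hy'pre with h1 | h1
        · obtain ⟨p, hp⟩ := hKy'
          have hp2 : p ∈ sWord S w '' K := image_subset_of_prefix S hKinv h1 hp
          exact le_trans (setDist_le_zero hp hp2) (by positivity)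
        · obtain ⟨p, hp⟩ := hKw
          have hp2 : p ∈ sWord S y' '' K := image_subset_of_prefix S hKinv h1 hp
          exact le_trans (setDist_le_zero hp2 hp) (by positivity)
      · calc setDist (sWord S y' '' K) (sWord S w '' K)
            = setDist (sWord S w '' K) (sWord S y' '' K) := setDist_comm _ _
          _ ≤ setDist (sWord S w '' K) (sWord S y '' K) :=
              setDist_le_setDist hsub hKy hKw
          _ ≤ κ * r ^ (m + 1) := hdist
          _ ≤ κ * r ^ m := hrm
    have hax := key x hx (slant_adj_dist hρ0 hrle hr0 hr1 hxy hx hy)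
    have haz := key z hz (slant_adj_dist hρ0 hrle hr0 hr1 hyz.symm hz hy)
    exact ⟨y', by simpa using hy'mem, hax.symm, haz⟩


end HypIFS
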